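/- Let G be a countable group and X a compact Hausdorff G-space. Suppose (μ_k)_{k ≥ 1} is a sequence of unital positive linear maps on a unital C*-algebra A, and a_1, a_2, … is a sequence in the unit ball of A such that for all l ≥ 2, all 1 ≤ s, k_1, …, k_r < l, and all 0 ≤ r < n_l, one has ‖μ_l ∘ μ_{k_r} ∘ ⋯ ∘ μ_{k_1}(a_s)‖ < 2^{−l}, where (n_k) is an increasing sequence of positive integers with (∑_{i=1}^k 2^{−i})^{n_k} < 2^{−k}. Then the map μ = ∑_{l=1}^∞ 2^{−l} μ_l (which is a unital positive linear map on A) satisfies μⁿ(a_s) → 0 as n → ∞, for each s. -/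

import Mathlib

set_option linter.unusedSectionVars false

open scoped ComplexStarModule

namespace IOCTZ

variable {A : Type*} [CStarAlgebra A] [PartialOrder A] [StarOrderedRing A]

lemma norm_realPart_le (x : A) : ‖(ℜ x : A)‖ ≤ ‖x‖ := by
  rw [realPart_apply_coe, norm_smul]
  calc ‖(2:ℝ)⁻¹‖ * ‖x + star x‖ ≤ 2⁻¹ * (‖x‖ + ‖star x‖) := by
        rw [Real.norm_eq_abs, abs_of_nonneg (by norm_num)]
        gcongr; exact norm_add_le _ _
    _ = ‖x‖ := by rw [norm_star]; ring

lemma norm_imaginaryPart_le (x : A) : ‖(ℑ x : A)‖ ≤ ‖x‖ := by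
  rw [imaginaryPart_apply_coe, norm_smul, norm_smul]
  calc ‖-Complex.I‖ * (‖(2:ℝ)⁻¹‖ * ‖x - star x‖) ≤ 1 * (2⁻¹ * (‖x‖ + ‖star x‖)) := by
        rw [norm_neg, Complex.norm_I, Real.norm_eq_abs, abs_of_nonneg (by norm_num)]
        gcongr; exact norm_sub_le _ _
    _ = ‖x‖ := by rw [norm_star]; ring

def IsGoodMap (φ : A →ₗ[ℂ] A) : Prop := φ 1 = 1 ∧ ∀ x : A, 0 ≤ x → 0 ≤ φ x

namespace IsGoodMap

variable {φ ψ : A →ₗ[ℂ] A}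

lemma mono (h : IsGoodMap φ) {x y : A} (hxy : x ≤ y) : φ x ≤ φ y := by
  have := h.2 _ (sub_nonneg.mpr hxy)
  rw [map_sub, sub_nonneg] at this
  exact this

lemma map_real_smul (φ : A →ₗ[ℂ] A) (r : ℝ) (x : A) : φ (r • x) = r • φ x := by
  rw [← algebraMap_smul ℂ r x, map_smul, algebraMap_smul]

lemma isSelfAdjoint (h : IsGoodMap φ) {x : A} (hx : IsSelfAdjoint x) :
    IsSelfAdjoint (φ x) := by
  rw [← CFC.posPart_sub_negPart x hx, map_sub]
  exact (IsSelfAdjoint.of_nonneg (h.2 _ (CFC.posPart_nonneg x))).sub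
    (IsSelfAdjoint.of_nonneg (h.2 _ (CFC.negPart_nonneg x)))

lemma map_algebraMap (h : IsGoodMap φ) (c : ℝ) : φ (algebraMap ℝ A c) = algebraMap ℝ A c := by
  rw [Algebra.algebraMap_eq_smul_one, map_real_smul, h.1]

lemma norm_sa_le (h : IsGoodMap φ) {x : A} (hx : IsSelfAdjoint x) : ‖φ x‖ ≤ ‖x‖ := by
  have h1 : φ x ≤ algebraMap ℝ A ‖x‖ := by
    calc φ x ≤ φ (algebraMap ℝ A ‖x‖) := h.mono hx.le_algebraMap_norm_self
      _ = algebraMap ℝ A ‖x‖ := h.map_algebraMap _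
  have h2 : algebraMap ℝ A (-‖x‖) ≤ φ x := by
    have := h.mono hx.neg_algebraMap_norm_le_self
    rwa [map_neg, h.map_algebraMap, ← map_neg] at this
  have hsa := h.isSelfAdjoint hx
  rcases subsingleton_or_nontrivial A with hA | hA
  · simp [Subsingleton.elim (φ x) (0 : A)]
  · rcases CStarAlgebra.norm_or_neg_norm_mem_spectrum hsa with hm | hm
    · exact (le_algebraMap_iff_spectrum_le hsa).mp h1 _ hm
    · have := (algebraMap_le_iff_le_spectrum hsa).mp h2 _ hm
      linarith

lemma norm_le (h : IsGoodMap φ) (x : A) : ‖φ x‖ ≤ 2 * ‖x‖ := by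
  have hd : φ x = φ (ℜ x : A) + Complex.I • φ (ℑ x : A) := by
    conv_lhs => rw [← realPart_add_I_smul_imaginaryPart x]
    rw [map_add, map_smul]
  calc ‖φ x‖ ≤ ‖φ (ℜ x : A)‖ + ‖Complex.I • φ (ℑ x : A)‖ := hd ▸ norm_add_le _ _
    _ = ‖φ (ℜ x : A)‖ + ‖φ (ℑ x : A)‖ := by rw [norm_smul, Complex.norm_I, one_mul]
    _ ≤ ‖(ℜ x : A)‖ + ‖(ℑ x : A)‖ :=
        add_le_add (h.norm_sa_le (ℜ x).2) (h.norm_sa_le (ℑ x).2)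
    _ ≤ ‖x‖ + ‖x‖ := add_le_add (norm_realPart_le x) (norm_imaginaryPart_le x)
    _ = 2 * ‖x‖ := by ring

lemma mul (h : IsGoodMap φ) (h' : IsGoodMap ψ) : IsGoodMap (φ * ψ) :=
  ⟨by simp [Module.End.mul_apply, h'.1, h.1], fun x hx => h.2 _ (h'.2 _ hx)⟩

lemma pow (h : IsGoodMap φ) (m : ℕ) : IsGoodMap (φ ^ m) := by
  induction m with
  | zero => exact ⟨rfl, fun x hx => hx⟩
  | succ k ih => rw [pow_succ]; exact ih.mul h

lemma norm_iterate_le (h : IsGoodMap φ) (m : ℕ) (x : A) : ‖(⇑φ)^[m] x‖ ≤ 2 * ‖x‖ := by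
  rw [← Module.End.pow_apply]
  exact (h.pow m).norm_le x

end IsGoodMap

lemma norm_hasSum_le {g : ℕ → A} {S : A} {u : ℕ → ℝ} (hg : HasSum g S)
    (hu : Summable u) (h : ∀ n, ‖g n‖ ≤ u n) : ‖S‖ ≤ ∑' n, u n := by
  have hsn : Summable fun n => ‖g n‖ := Summable.of_nonneg_of_le (fun _ => norm_nonneg _) h hu
  calc ‖S‖ = ‖∑' n, g n‖ := by rw [hg.tsum_eq]
    _ ≤ ∑' n, ‖g n‖ := norm_tsum_le_tsum_norm hsn
    _ ≤ ∑' n, u n := Summable.tsum_le_tsum h hsn hu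

variable (μ : ℕ → (A →ₗ[ℂ] A))

/-- composition of maps along a word, first letter applied first. -/
noncomputable def wordMap (r : ℕ) (k : Fin r → ℕ) (x : A) : A :=
  (List.ofFn fun j => ((μ (k j) : A →ₗ[ℂ] A) : A → A)).foldl (fun x φ => φ x) x

lemma wordMap_zero (k : Fin 0 → ℕ) (x : A) : wordMap μ 0 k x = x := rfl

lemma wordMap_succ (r : ℕ) (k : Fin (r+1) → ℕ) (x : A) :
    wordMap μ (r+1) k x = wordMap μ r (fun i => k i.succ) (μ (k 0) x) := by
  unfold wordMap
  rw [List.ofFn_succ, List.foldl_cons]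

lemma wordMap_add (r : ℕ) (k : Fin r → ℕ) (x y : A) :
    wordMap μ r k (x + y) = wordMap μ r k x + wordMap μ r k y := by
  induction r generalizing x y with
  | zero => rfl
  | succ r ih => rw [wordMap_succ, wordMap_succ, wordMap_succ, map_add, ih]

lemma wordMap_real_smul (r : ℕ) (k : Fin r → ℕ) (c : ℝ) (x : A) :
    wordMap μ r k (c • x) = c • wordMap μ r k x := by
  induction r generalizing x with
  | zero => rfl
  | succ r ih =>
      rw [wordMap_succ, wordMap_succ, ← algebraMap_smul ℂ c x, map_smul, algebraMap_smul, ih]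

lemma wordMap_sum (r : ℕ) (k : Fin r → ℕ) {ι : Type*} (t : Finset ι) (f : ι → A) :
    wordMap μ r k (∑ i ∈ t, f i) = ∑ i ∈ t, wordMap μ r k (f i) := by
  classical
  induction t using Finset.induction_on with
  | empty =>
      simp only [Finset.sum_empty]
      have : wordMap μ r k ((0:ℝ) • (0:A)) = (0:ℝ) • wordMap μ r k 0 :=
        wordMap_real_smul μ r k 0 0
      simpa using this
  | insert _ _ hnot ih =>
      rw [Finset.sum_insert hnot, Finset.sum_insert hnot, wordMap_add, ih]

variable (M : ℕ)

/-- The truncated map. -/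
noncomputable def Plm : A →ₗ[ℂ] A := ∑ i ∈ Finset.range M, ((1/2:ℝ)^(i+1)) • μ (i+1)

lemma Plm_apply (x : A) :
    Plm μ M x = ∑ i ∈ Finset.range M, ((1/2:ℝ)^(i+1)) • μ (i+1) x := by
  simp [Plm, LinearMap.sum_apply, LinearMap.smul_apply]

lemma Plm_apply' (x : A) :
    Plm μ M x = ∑ v : Fin M, ((1/2:ℝ)^((v:ℕ)+1)) • μ ((v:ℕ)+1) x := by
  rw [Plm_apply, ← Fin.sum_univ_eq_sum_range]

lemma Plm_iterate_eq (r : ℕ) (x : A) :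
    (⇑(Plm μ M))^[r] x = ∑ g : Fin r → Fin M,
      (∏ i, ((1/2:ℝ)^((g i : ℕ)+1))) • wordMap μ r (fun i => (g i : ℕ)+1) x := by
  induction r generalizing x with
  | zero =>
      simp only [Function.iterate_zero, id_eq]
      rw [Finset.univ_unique, Finset.sum_singleton]
      simp [wordMap_zero]
  | succ r ih =>
      rw [Function.iterate_succ_apply, ih (Plm μ M x)]
      have step : ∀ (v : Fin M) (g : Fin r → Fin M),
          (∏ i : Fin (r+1), ((1/2:ℝ)^(((Fin.cons v g : Fin (r+1) → Fin M) i : ℕ)+1))) •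
            wordMap μ (r+1) (fun i => ((Fin.cons v g : Fin (r+1) → Fin M) i : ℕ)+1) x
          = ((1/2:ℝ)^((v:ℕ)+1) * ∏ i, ((1/2:ℝ)^((g i : ℕ)+1))) •
            wordMap μ r (fun i => (g i : ℕ)+1) (μ ((v:ℕ)+1) x) := by
        intro v g
        have hp : (∏ i : Fin (r+1), ((1/2:ℝ)^(((Fin.cons v g : Fin (r+1) → Fin M) i : ℕ)+1)))
            = (1/2:ℝ)^((v:ℕ)+1) * ∏ i, ((1/2:ℝ)^((g i : ℕ)+1)) := by
          rw [Fin.prod_univ_succ]; simp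
        have hks : (fun i : Fin r => ((Fin.cons v g : Fin (r+1) → Fin M) i.succ : ℕ) + 1)
            = fun i => (g i : ℕ)+1 := by ext i; simp
        rw [wordMap_succ, hp, hks]
        simp
      calc ∑ g : Fin r → Fin M,
            (∏ i, ((1/2:ℝ)^((g i : ℕ)+1))) • wordMap μ r (fun i => (g i : ℕ)+1) (Plm μ M x)
          = ∑ g : Fin r → Fin M, ∑ v : Fin M,
              ((1/2:ℝ)^((v:ℕ)+1) * ∏ i, ((1/2:ℝ)^((g i : ℕ)+1))) •
                wordMap μ r (fun i => (g i : ℕ)+1) (μ ((v:ℕ)+1) x) := by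
            refine Finset.sum_congr rfl fun g _ => ?_
            rw [Plm_apply', wordMap_sum, Finset.smul_sum]
            refine Finset.sum_congr rfl fun v _ => ?_
            rw [wordMap_real_smul, smul_smul, mul_comm]
        _ = ∑ v : Fin M, ∑ g : Fin r → Fin M,
              ((1/2:ℝ)^((v:ℕ)+1) * ∏ i, ((1/2:ℝ)^((g i : ℕ)+1))) •
                wordMap μ r (fun i => (g i : ℕ)+1) (μ ((v:ℕ)+1) x) := Finset.sum_comm
        _ = ∑ p : Fin M × (Fin r → Fin M),
              (∏ i, ((1/2:ℝ)^(((Fin.consEquiv (fun _ : Fin (r+1) => Fin M) p) i : ℕ)+1))) •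
                wordMap μ (r+1)
                  (fun i => ((Fin.consEquiv (fun _ : Fin (r+1) => Fin M) p) i : ℕ)+1) x := by
            rw [Fintype.sum_prod_type]
            exact Finset.sum_congr rfl fun v _ => Finset.sum_congr rfl fun g _ => (step v g).symm
        _ = ∑ h : Fin (r+1) → Fin M,
              (∏ i, ((1/2:ℝ)^((h i : ℕ)+1))) • wordMap μ (r+1) (fun i => (h i : ℕ)+1) x :=
            Fintype.sum_equiv (Fin.consEquiv (fun _ : Fin (r+1) => Fin M)) _ _ (fun p => rfl)

/-- sum of the weights over all words of length `r`. -/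
lemma weight_sum (r : ℕ) :
    ∑ g : Fin r → Fin M, (∏ i, ((1/2:ℝ)^((g i : ℕ)+1)))
      = (∑ v : Fin M, ((1/2:ℝ)^((v:ℕ)+1)))^r := by
  classical
  have h := Finset.prod_univ_sum (fun _ : Fin r => (Finset.univ : Finset (Fin M)))
    (fun _ v => ((1/2:ℝ)^((v:ℕ)+1)))
  rw [Finset.prod_const, Finset.card_univ, Fintype.card_fin] at h
  rw [h, Fintype.piFinset_univ]

lemma geom_range_sum : ∑ i ∈ Finset.range M, ((1:ℝ)/2)^(i+1) = 1 - ((1:ℝ)/2)^M := by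
  induction M with
  | zero => simp
  | succ K ih => rw [Finset.sum_range_succ, ih, pow_succ]; ring

lemma geom_Icc_sum : ∑ i ∈ Finset.Icc 1 M, ((1:ℝ)/2)^i = 1 - ((1:ℝ)/2)^M := by
  rw [← Finset.Ico_add_one_right_eq_Icc, Finset.sum_Ico_eq_sum_range, Nat.add_sub_cancel,
    ← geom_range_sum M]
  exact Finset.sum_congr rfl fun i _ => by rw [add_comm]

lemma geom_sum_le_inv {x : ℝ} (h0 : 0 ≤ x) (h1 : x < 1) (m : ℕ) :
    ∑ j ∈ Finset.range m, x^j ≤ (1-x)⁻¹ := by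
  have hd : (0:ℝ) < 1 - x := by linarith
  have he : ∑ j ∈ Finset.range m, x ^ j = (1 - x ^ m) / (1 - x) := by
    rw [geom_sum_eq (by linarith : x ≠ 1)]
    rw [div_eq_div_iff (by linarith) (by linarith)]
    ring
  rw [he, div_le_iff₀ hd, inv_mul_cancel₀ hd.ne']
  have := pow_nonneg h0 m
  linarith

lemma geom_Ico_sum_le {x : ℝ} (h0 : 0 ≤ x) (h1 : x < 1) (N m : ℕ) :
    ∑ j ∈ Finset.Ico N m, x^j ≤ x^N * (1-x)⁻¹ := by
  rw [Finset.sum_Ico_eq_sum_range]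
  simp_rw [pow_add]
  rw [← Finset.mul_sum]
  exact mul_le_mul_of_nonneg_left (geom_sum_le_inv h0 h1 _) (pow_nonneg h0 N)

end IOCTZ

theorem iterates_of_convex_combination_tend_to_zero
    {A : Type*} [CStarAlgebra A] [PartialOrder A] [StarOrderedRing A]
    (μ : ℕ → (A →ₗ[ℂ] A))
    (hunital : ∀ l, μ l 1 = 1)
    (hpos : ∀ l, ∀ x : A, 0 ≤ x → 0 ≤ μ l x)
    (n : ℕ → ℕ) (hmono : StrictMono n) (hn1 : ∀ k, 1 ≤ n k)
    (hnk : ∀ k : ℕ, 1 ≤ k →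
      (∑ i ∈ Finset.Icc 1 k, ((1 : ℝ) / 2) ^ i) ^ (n k) < ((1 : ℝ) / 2) ^ k)
    (a : ℕ → A) (ha : ∀ s, ‖a s‖ ≤ 1)
    (hav : ∀ l : ℕ, 2 ≤ l → ∀ r : ℕ, r < n l → ∀ s : ℕ, 1 ≤ s → s < l →
      ∀ k : Fin r → ℕ, (∀ j, 1 ≤ k j ∧ k j < l) →
      ‖μ l ((List.ofFn fun j => ((μ (k j) : A →ₗ[ℂ] A) : A → A)).foldl
          (fun x φ => φ x) (a s))‖ < ((1 : ℝ) / 2) ^ l)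
    (μtot : A →ₗ[ℂ] A)
    (hμtot : ∀ x : A,
      HasSum (fun l : ℕ => ((1 : ℝ) / 2) ^ (l + 1) • μ (l + 1) x) (μtot x)) :
    ∀ s : ℕ, 1 ≤ s →
      Filter.Tendsto (fun m : ℕ => ‖(fun x => μtot x)^[m] (a s)‖)
        Filter.atTop (nhds 0) := by
  intro s hs
  have hgood : ∀ l, IOCTZ.IsGoodMap (μ l) := fun l => ⟨hunital l, hpos l⟩
  -- μtot is a good map
  have hμtot1 : μtot 1 = 1 := by
    have h1 : HasSum (fun l : ℕ => ((1:ℝ)/2)^(l+1) • (1:A)) (μtot 1) := by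
      simpa only [hunital] using hμtot 1
    have h2 : HasSum (fun l : ℕ => ((1:ℝ)/2)^(l+1)) 1 := by
      have h3 := (hasSum_geometric_of_lt_one (by norm_num : (0:ℝ) ≤ 1/2)
        (by norm_num : (1:ℝ)/2 < 1)).mul_right ((1:ℝ)/2)
      have h4 : ((1:ℝ) - 1/2)⁻¹ * (1/2) = 1 := by norm_num
      rw [h4] at h3
      simpa only [← pow_succ] using h3
    have h5 := h2.smul_const (1:A)
    rw [one_smul] at h5
    exact h1.unique h5
  have hμtotpos : ∀ x : A, 0 ≤ x → 0 ≤ μtot x := by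
    intro x hx
    refine hasSum_le (fun l => ?_) hasSum_zero (hμtot x)
    exact smul_nonneg (by positivity) (hpos _ _ hx)
  have hgoodtot : IOCTZ.IsGoodMap μtot := ⟨hμtot1, hμtotpos⟩
  have hgeo : Summable (fun n : ℕ => ((1:ℝ)/2)^n) :=
    summable_geometric_of_lt_one (by norm_num) (by norm_num)
  -- THE KEY ESTIMATE
  have key : ∀ M : ℕ, 1 ≤ M → s ≤ M → ∀ m : ℕ,
      ‖(⇑μtot)^[m] (a s)‖ ≤ 2 * (1 - ((1:ℝ)/2)^M)^m + 10 * ((1:ℝ)/2)^M := by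
    intro M hM1 hsM m
    set δ : ℝ := ((1:ℝ)/2)^M with hδdef
    have hδpos : 0 < δ := by positivity
    have hδle : δ ≤ 1/2 := by
      calc δ ≤ ((1:ℝ)/2)^1 := pow_le_pow_of_le_one (by norm_num) (by norm_num) hM1
        _ = 1/2 := pow_one _
    have h1δ0 : (0:ℝ) ≤ 1 - δ := by linarith
    have h1δ1 : (1:ℝ) - δ < 1 := by linarith
    set P : A →ₗ[ℂ] A := IOCTZ.Plm μ M with hPdef
    -- P preserves selfadjointness and contracts selfadjoints by 1 - δ
    have hPsa : ∀ z : A, IsSelfAdjoint z → IsSelfAdjoint (P z) := by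
      intro z hz
      rw [hPdef, IOCTZ.Plm_apply]
      exact AddSubgroup.sum_mem (selfAdjoint A) fun i _ =>
        ((IsSelfAdjoint.all ((1/2:ℝ)^(i+1))).smul ((hgood (i+1)).isSelfAdjoint hz))
    have hPsanorm : ∀ z : A, IsSelfAdjoint z → ‖P z‖ ≤ (1 - δ) * ‖z‖ := by
      intro z hz
      rw [hPdef, IOCTZ.Plm_apply]
      calc ‖∑ i ∈ Finset.range M, ((1/2:ℝ)^(i+1)) • μ (i+1) z‖
          ≤ ∑ i ∈ Finset.range M, ‖((1/2:ℝ)^(i+1)) • μ (i+1) z‖ := norm_sum_le _ _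
        _ ≤ ∑ i ∈ Finset.range M, ((1/2:ℝ)^(i+1)) * ‖z‖ := by
            refine Finset.sum_le_sum fun i _ => ?_
            rw [norm_smul, Real.norm_of_nonneg (by positivity)]
            exact mul_le_mul_of_nonneg_left ((hgood (i+1)).norm_sa_le hz) (by positivity)
        _ = (1 - δ) * ‖z‖ := by
            rw [← Finset.sum_mul, IOCTZ.geom_range_sum M]
    have hPitersa : ∀ (r : ℕ) (z : A), IsSelfAdjoint z →
        IsSelfAdjoint ((⇑P)^[r] z) ∧ ‖(⇑P)^[r] z‖ ≤ (1 - δ)^r * ‖z‖ := by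
      intro r
      induction r with
      | zero => intro z hz; simpa using hz
      | succ r ih =>
          intro z hz
          rw [Function.iterate_succ_apply']
          obtain ⟨ihsa, ihn⟩ := ih z hz
          refine ⟨hPsa _ ihsa, ?_⟩
          calc ‖P ((⇑P)^[r] z)‖ ≤ (1 - δ) * ‖(⇑P)^[r] z‖ := hPsanorm _ ihsa
            _ ≤ (1 - δ) * ((1 - δ)^r * ‖z‖) := by
                exact mul_le_mul_of_nonneg_left ihn h1δ0
            _ = (1 - δ)^(r+1) * ‖z‖ := by ring
    have hPiter : ∀ r : ℕ, ‖(⇑P)^[r] (a s)‖ ≤ 2 * (1 - δ)^r := by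
      intro r
      have hsplit : (⇑P)^[r] (a s)
          = (⇑P)^[r] (ℜ (a s) : A) + Complex.I • (⇑P)^[r] (ℑ (a s) : A) := by
        conv_lhs => rw [← realPart_add_I_smul_imaginaryPart (a s)]
        rw [← Module.End.pow_apply, ← Module.End.pow_apply, ← Module.End.pow_apply,
          map_add, map_smul]
      rw [hsplit]
      have hre := (hPitersa r _ (ℜ (a s)).2).2
      have him := (hPitersa r _ (ℑ (a s)).2).2
      calc ‖(⇑P)^[r] (ℜ (a s) : A) + Complex.I • (⇑P)^[r] (ℑ (a s) : A)‖
          ≤ ‖(⇑P)^[r] (ℜ (a s) : A)‖ + ‖Complex.I • (⇑P)^[r] (ℑ (a s) : A)‖ :=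
            norm_add_le _ _
        _ = ‖(⇑P)^[r] (ℜ (a s) : A)‖ + ‖(⇑P)^[r] (ℑ (a s) : A)‖ := by
            rw [norm_smul, Complex.norm_I, one_mul]
        _ ≤ (1 - δ)^r * ‖(ℜ (a s) : A)‖ + (1 - δ)^r * ‖(ℑ (a s) : A)‖ :=
            add_le_add hre him
        _ ≤ (1 - δ)^r * 1 + (1 - δ)^r * 1 := by
            gcongr
            · exact (IOCTZ.norm_realPart_le (a s)).trans (ha s)
            · exact (IOCTZ.norm_imaginaryPart_le (a s)).trans (ha s)
        _ = 2 * (1 - δ)^r := by ring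
    -- tail sums
    have hQsum : ∀ x : A, HasSum (fun k : ℕ => ((1:ℝ)/2)^(k+M+1) • μ (k+M+1) x)
        (μtot x - P x) := by
      intro x
      have h := (hasSum_nat_add_iff'
        (f := fun l : ℕ => ((1:ℝ)/2)^(l+1) • μ (l+1) x) M).mpr (hμtot x)
      rw [← IOCTZ.Plm_apply, ← hPdef] at h
      exact h
    have hvsum : ∑ v : Fin M, ((1/2:ℝ)^((v:ℕ)+1)) = 1 - δ :=
      (Fin.sum_univ_eq_sum_range (fun i => ((1/2:ℝ))^(i+1)) M).trans (IOCTZ.geom_range_sum M)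
    -- estimate for μ l applied to iterates of P
    have hμlb : ∀ l, M+1 ≤ l → ∀ j : ℕ, ‖μ l ((⇑P)^[j] (a s))‖
        ≤ (if j < n l then (1-δ)^j * ((1:ℝ)/2)^l else 4 * (1-δ)^j) := by
      intro l hl j
      have hl2 : 2 ≤ l := by omega
      by_cases hj : j < n l
      · rw [if_pos hj]
        rw [hPdef, IOCTZ.Plm_iterate_eq, map_sum]
        have hterm : ∀ g : Fin j → Fin M,
            μ l ((∏ i, ((1/2:ℝ)^((g i : ℕ)+1))) •
              IOCTZ.wordMap μ j (fun i => (g i : ℕ)+1) (a s))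
            = (∏ i, ((1/2:ℝ)^((g i : ℕ)+1))) •
              μ l (IOCTZ.wordMap μ j (fun i => (g i : ℕ)+1) (a s)) :=
          fun g => IOCTZ.IsGoodMap.map_real_smul (μ l) _ _
        rw [Finset.sum_congr rfl fun g _ => hterm g]
        calc ‖∑ g : Fin j → Fin M, (∏ i, ((1/2:ℝ)^((g i : ℕ)+1))) •
              μ l (IOCTZ.wordMap μ j (fun i => (g i : ℕ)+1) (a s))‖
            ≤ ∑ g : Fin j → Fin M, ‖(∏ i, ((1/2:ℝ)^((g i : ℕ)+1))) •
              μ l (IOCTZ.wordMap μ j (fun i => (g i : ℕ)+1) (a s))‖ := norm_sum_le _ _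
          _ ≤ ∑ g : Fin j → Fin M, (∏ i, ((1/2:ℝ)^((g i : ℕ)+1))) * ((1:ℝ)/2)^l := by
              refine Finset.sum_le_sum fun g _ => ?_
              rw [norm_smul, Real.norm_of_nonneg (by positivity)]
              refine mul_le_mul_of_nonneg_left ?_ (by positivity)
              have hkcond : ∀ i : Fin j, 1 ≤ (g i : ℕ)+1 ∧ (g i : ℕ)+1 < l := fun i => by
                have := (g i).isLt; omega
              exact (hav l hl2 j hj s hs (by omega) (fun i => (g i : ℕ)+1) hkcond).le
          _ = (1-δ)^j * ((1:ℝ)/2)^l := by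
              rw [← Finset.sum_mul, IOCTZ.weight_sum, hvsum]
      · rw [if_neg hj]
        calc ‖μ l ((⇑P)^[j] (a s))‖ ≤ 2 * ‖(⇑P)^[j] (a s)‖ := (hgood l).norm_le _
          _ ≤ 2 * (2 * (1-δ)^j) := mul_le_mul_of_nonneg_left (hPiter j) (by norm_num)
          _ = 4 * (1-δ)^j := by ring
    -- (1-δ)^(n l) ≤ δ for l ≥ M+1
    have hδn : ∀ l, M+1 ≤ l → (1-δ)^(n l) ≤ δ := by
      intro l hl
      have h1 : (1-δ)^(n l) ≤ (1-δ)^(n M) :=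
        pow_le_pow_of_le_one h1δ0 (by linarith) (hmono.monotone (by omega))
      have h2 : ((1:ℝ) - δ)^(n M) < δ := by
        have h3 := hnk M hM1
        rwa [IOCTZ.geom_Icc_sum M] at h3
      linarith
    -- summing the coefficients over j
    have hcsum : ∀ l, M+1 ≤ l → ∀ m' : ℕ,
        ∑ j ∈ Finset.range m', (if j < n l then (1-δ)^j * ((1:ℝ)/2)^l else 4 * (1-δ)^j)
          ≤ 5 := by
      intro l hl m'
      have hpointwise : ∀ j ∈ Finset.range m',
          (if j < n l then (1-δ)^j * ((1:ℝ)/2)^l else 4 * (1-δ)^j)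
          ≤ ((1:ℝ)/2)^l * (1-δ)^j + (if n l ≤ j then 4 * (1-δ)^j else 0) := by
        intro j _
        by_cases hj : j < n l
        · rw [if_pos hj, if_neg (by omega)]
          have he : (1-δ)^j * ((1:ℝ)/2)^l = ((1:ℝ)/2)^l * (1-δ)^j := mul_comm _ _
          rw [he, add_zero]
        · rw [if_neg hj, if_pos (by omega)]
          have hn0 : (0:ℝ) ≤ ((1:ℝ)/2)^l * (1-δ)^j := by positivity
          linarith
      have hss : (1:ℝ) - (1-δ) = δ := by ring
      have part1 : ((1:ℝ)/2)^l * ∑ j ∈ Finset.range m', (1-δ)^j ≤ 1/2 := by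
        have hgs := IOCTZ.geom_sum_le_inv h1δ0 h1δ1 m'
        rw [hss] at hgs
        calc ((1:ℝ)/2)^l * ∑ j ∈ Finset.range m', (1-δ)^j
            ≤ ((1:ℝ)/2)^l * δ⁻¹ := mul_le_mul_of_nonneg_left hgs (by positivity)
          _ ≤ ((1:ℝ)/2)^(M+1) * δ⁻¹ := by
              refine mul_le_mul_of_nonneg_right ?_ (by positivity)
              exact pow_le_pow_of_le_one (by norm_num) (by norm_num) hl
          _ = 1/2 := by
              rw [pow_succ, ← hδdef, mul_comm δ, mul_assoc,
                mul_inv_cancel₀ hδpos.ne', mul_one]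
      have part2 : ∑ j ∈ Finset.range m', (if n l ≤ j then 4 * (1-δ)^j else 0) ≤ 4 := by
        have heq : ∑ j ∈ Finset.range m', (if n l ≤ j then 4 * (1-δ)^j else 0)
            = ∑ j ∈ Finset.Ico (n l) m', 4 * (1-δ)^j := by
          rw [← Finset.sum_filter, Finset.range_eq_Ico, Finset.Ico_filter_le,
            max_eq_right (Nat.zero_le _)]
        rw [heq, ← Finset.mul_sum]
        have hgs := IOCTZ.geom_Ico_sum_le h1δ0 h1δ1 (n l) m'
        rw [hss] at hgs
        calc 4 * ∑ j ∈ Finset.Ico (n l) m', (1-δ)^j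
            ≤ 4 * ((1-δ)^(n l) * δ⁻¹) := mul_le_mul_of_nonneg_left hgs (by norm_num)
          _ ≤ 4 * (δ * δ⁻¹) := by
              refine mul_le_mul_of_nonneg_left ?_ (by norm_num)
              exact mul_le_mul_of_nonneg_right (hδn l hl) (by positivity)
          _ = 4 := by rw [mul_inv_cancel₀ hδpos.ne', mul_one]
      calc ∑ j ∈ Finset.range m', (if j < n l then (1-δ)^j * ((1:ℝ)/2)^l else 4 * (1-δ)^j)
          ≤ ∑ j ∈ Finset.range m',
              (((1:ℝ)/2)^l * (1-δ)^j + (if n l ≤ j then 4 * (1-δ)^j else 0)) :=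
            Finset.sum_le_sum hpointwise
        _ = ((1:ℝ)/2)^l * ∑ j ∈ Finset.range m', (1-δ)^j
            + ∑ j ∈ Finset.range m', (if n l ≤ j then 4 * (1-δ)^j else 0) := by
            rw [Finset.sum_add_distrib, Finset.mul_sum]
        _ ≤ 1/2 + 4 := add_le_add part1 part2
        _ ≤ 5 := by norm_num
    -- the summable majorant
    have hsummand : ∀ j : ℕ, Summable (fun k : ℕ => ((1:ℝ)/2)^(k+M+1) *
        (if j < n (k+M+1) then (1-δ)^j * ((1:ℝ)/2)^(k+M+1) else 4 * (1-δ)^j)) := by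
      intro j
      have hsumg : Summable (fun k : ℕ => ((1:ℝ)/2)^(k+M+1)) := by
        have he : (fun k : ℕ => ((1:ℝ)/2)^(k+M+1))
            = fun k => ((1:ℝ)/2)^k * ((1:ℝ)/2)^(M+1) := by
          funext k; rw [add_assoc, pow_add]
        rw [he]; exact hgeo.mul_right _
      refine Summable.of_nonneg_of_le (fun k => ?_) (fun k => ?_) (hsumg.mul_left 4)
      · have h1 : (0:ℝ) ≤ (if j < n (k+M+1) then (1-δ)^j * ((1:ℝ)/2)^(k+M+1)
            else 4 * (1-δ)^j) := by
          by_cases hj : j < n (k+M+1)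
          · rw [if_pos hj]; positivity
          · rw [if_neg hj]; positivity
        exact mul_nonneg (by positivity) h1
      · rw [mul_comm (4:ℝ) (((1:ℝ)/2)^(k+M+1))]
        refine mul_le_mul_of_nonneg_left ?_
          (show (0:ℝ) ≤ ((1:ℝ)/2)^(k+M+1) by positivity)
        split
        · calc (1-δ)^j * ((1:ℝ)/2)^(k+M+1)
                ≤ 1 * 1 := by
                  refine mul_le_mul (pow_le_one₀ h1δ0 (by linarith)) (pow_le_one₀ (by norm_num)
                    (by norm_num)) (by positivity) (by norm_num)
            _ ≤ 4 := by norm_num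
        · have h2 : (1-δ)^j ≤ 1 := pow_le_one₀ h1δ0 (by linarith)
          linarith
    have hδtsum : ∑' k : ℕ, ((1:ℝ)/2)^(k+M+1) = δ := by
      have he : (fun k : ℕ => ((1:ℝ)/2)^(k+M+1))
          = fun k => ((1:ℝ)/2)^k * ((1:ℝ)/2)^(M+1) := by
        funext k; rw [add_assoc, pow_add]
      rw [he, tsum_mul_right, tsum_geometric_of_lt_one (by norm_num) (by norm_num)]
      have h2 : ((1:ℝ) - 1/2)⁻¹ = 2 := by norm_num
      rw [h2, pow_succ, ← hδdef]
      ring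
    -- the norm of the tail applied to the iterates of P
    have hqle : ∀ j : ℕ, ‖μtot ((⇑P)^[j] (a s)) - P ((⇑P)^[j] (a s))‖
        ≤ ∑' k : ℕ, ((1:ℝ)/2)^(k+M+1) *
          (if j < n (k+M+1) then (1-δ)^j * ((1:ℝ)/2)^(k+M+1) else 4 * (1-δ)^j) := by
      intro j
      refine IOCTZ.norm_hasSum_le (hQsum ((⇑P)^[j] (a s))) (hsummand j) (fun k => ?_)
      rw [norm_smul, Real.norm_of_nonneg (by positivity)]
      exact mul_le_mul_of_nonneg_left (hμlb (k+M+1) (by omega) j) (by positivity)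
    have hqtotal : ∀ m' : ℕ, ∑ j ∈ Finset.range m',
        ‖μtot ((⇑P)^[j] (a s)) - P ((⇑P)^[j] (a s))‖ ≤ 5 * δ := by
      intro m'
      have hsumg : Summable (fun k : ℕ => ((1:ℝ)/2)^(k+M+1)) := by
        have he : (fun k : ℕ => ((1:ℝ)/2)^(k+M+1))
            = fun k => ((1:ℝ)/2)^k * ((1:ℝ)/2)^(M+1) := by
          funext k; rw [add_assoc, pow_add]
        rw [he]; exact hgeo.mul_right _
      calc ∑ j ∈ Finset.range m', ‖μtot ((⇑P)^[j] (a s)) - P ((⇑P)^[j] (a s))‖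
          ≤ ∑ j ∈ Finset.range m', ∑' k : ℕ, ((1:ℝ)/2)^(k+M+1) *
              (if j < n (k+M+1) then (1-δ)^j * ((1:ℝ)/2)^(k+M+1) else 4 * (1-δ)^j) :=
            Finset.sum_le_sum fun j _ => hqle j
        _ = ∑' k : ℕ, ∑ j ∈ Finset.range m', ((1:ℝ)/2)^(k+M+1) *
              (if j < n (k+M+1) then (1-δ)^j * ((1:ℝ)/2)^(k+M+1) else 4 * (1-δ)^j) :=
            (Summable.tsum_finsetSum (fun j _ => hsummand j)).symm
        _ ≤ ∑' k : ℕ, ((1:ℝ)/2)^(k+M+1) * 5 := by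
            refine Summable.tsum_le_tsum (fun k => ?_) (summable_sum (fun j _ => hsummand j))
              (hsumg.mul_right 5)
            rw [← Finset.mul_sum]
            exact mul_le_mul_of_nonneg_left (hcsum (k+M+1) (by omega) m') (by positivity)
        _ = 5 * δ := by rw [tsum_mul_right, hδtsum, mul_comm]
    -- the telescoping identity
    have hiden : ∀ m' : ℕ, (⇑μtot)^[m'] (a s) = (⇑P)^[m'] (a s)
        + ∑ j ∈ Finset.range m', (⇑μtot)^[m' - 1 - j]
            (μtot ((⇑P)^[j] (a s)) - P ((⇑P)^[j] (a s))) := by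
      intro m'
      induction m' with
      | zero => simp
      | succ m' ih =>
          rw [Function.iterate_succ_apply' (⇑μtot) m', ih, map_add, map_sum]
          have h2 : ∀ j ∈ Finset.range m',
              μtot ((⇑μtot)^[m'-1-j] (μtot ((⇑P)^[j] (a s)) - P ((⇑P)^[j] (a s))))
              = (⇑μtot)^[m' - j] (μtot ((⇑P)^[j] (a s)) - P ((⇑P)^[j] (a s))) := by
            intro j hj
            have h5 : m' - j = (m' - 1 - j) + 1 := by
              have := Finset.mem_range.mp hj; omega
            rw [h5, Function.iterate_succ_apply']
          rw [Finset.sum_congr rfl h2, Finset.sum_range_succ]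
          have h3 : m' + 1 - 1 - m' = 0 := by omega
          have h4 : ∀ j, m' + 1 - 1 - j = m' - j := fun j => by omega
          simp only [h3, h4, Function.iterate_zero, id_eq]
          rw [Function.iterate_succ_apply' (⇑P) m' (a s)]
          abel
    -- put everything together
    calc ‖(⇑μtot)^[m] (a s)‖
        = ‖(⇑P)^[m] (a s) + ∑ j ∈ Finset.range m, (⇑μtot)^[m-1-j]
            (μtot ((⇑P)^[j] (a s)) - P ((⇑P)^[j] (a s)))‖ := by rw [hiden m]
      _ ≤ ‖(⇑P)^[m] (a s)‖ + ∑ j ∈ Finset.range m, ‖(⇑μtot)^[m-1-j]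
            (μtot ((⇑P)^[j] (a s)) - P ((⇑P)^[j] (a s)))‖ :=
          (norm_add_le _ _).trans (add_le_add le_rfl (norm_sum_le _ _))
      _ ≤ 2 * (1-δ)^m + ∑ j ∈ Finset.range m,
            2 * ‖μtot ((⇑P)^[j] (a s)) - P ((⇑P)^[j] (a s))‖ :=
          add_le_add (hPiter m)
            (Finset.sum_le_sum fun j _ => hgoodtot.norm_iterate_le _ _)
      _ = 2 * (1-δ)^m + 2 * ∑ j ∈ Finset.range m,
            ‖μtot ((⇑P)^[j] (a s)) - P ((⇑P)^[j] (a s))‖ := by rw [Finset.mul_sum]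
      _ ≤ 2 * (1-δ)^m + 2 * (5 * δ) := by
          have := hqtotal m
          nlinarith [hqtotal m]
      _ = 2 * (1-δ)^m + 10 * δ := by ring
  -- conclude convergence from the key estimate
  have hfun : (fun x : A => μtot x) = ⇑μtot := rfl
  rw [hfun, Metric.tendsto_atTop]
  intro ε hε
  obtain ⟨M₀, hM₀⟩ := exists_pow_lt_of_lt_one
    (show (0:ℝ) < ε/40 by linarith) (show (1:ℝ)/2 < 1 by norm_num)
  set M : ℕ := max M₀ (max s 1) with hM
  have hM1 : 1 ≤ M := le_max_of_le_right (le_max_right _ _)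
  have hsM : s ≤ M := le_max_of_le_right (le_max_left _ _)
  have hδpos : (0:ℝ) < ((1:ℝ)/2)^M := by positivity
  have hMM0 : ((1:ℝ)/2)^M ≤ ((1:ℝ)/2)^M₀ :=
    pow_le_pow_of_le_one (by norm_num) (by norm_num) (le_max_left _ _)
  have h10 : 10 * ((1:ℝ)/2)^M < ε/2 := by nlinarith
  have h1δ0 : (0:ℝ) ≤ 1 - ((1:ℝ)/2)^M := by
    have : ((1:ℝ)/2)^M ≤ 1 := pow_le_one₀ (by norm_num) (by norm_num)
    linarith
  have h1δ1 : (1:ℝ) - ((1:ℝ)/2)^M < 1 := by linarith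
  have htend := tendsto_pow_atTop_nhds_zero_of_lt_one h1δ0 h1δ1
  obtain ⟨N, hN⟩ := Filter.eventually_atTop.mp
    (htend.eventually (gt_mem_nhds (show (0:ℝ) < ε/4 by linarith)))
  refine ⟨N, fun m hm => ?_⟩
  rw [Real.dist_0_eq_abs, abs_of_nonneg (norm_nonneg _)]
  calc ‖(⇑μtot)^[m] (a s)‖ ≤ 2 * (1 - ((1:ℝ)/2)^M)^m + 10 * ((1:ℝ)/2)^M :=
        key M hM1 hsM m
    _ < 2 * (ε/4) + ε/2 := by
        have := hN m hm
        have h2 : 2 * (1 - ((1:ℝ)/2)^M)^m ≤ 2 * ((1 - ((1:ℝ)/2)^M)^m) := le_rfl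
        nlinarith [hN m hm]
    _ = ε := by ring
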